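/- Let κ, η, t̄ be real numbers with κ ≥ 0, 0 ≤ η ≤ 1/2, t̄ ≥ 0, and κ·t̄ < 1. Let μ⋆, m : [0, t̄] → ℝ be continuous functions satisfying, for every s ∈ [0, t̄], (1 − η)·(1 − κ·s) ≤ μ⋆(s) ≤ (1 + η)·(1 − κ·s) and 0 ≤ m(s) ≤ (1 + η)·κ. Then ∫₀^{t̄} m(s)/μ⋆(s) ds ≤ ((1 + η)/(1 − η)) · ( log(μ⋆(t̄)^{−1}) + log(1 + η) ). -/

import Mathlib

open MeasureTheory

/-- The time-integral estimate with only logarithmic degeneracy: if `μ⋆`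
decays approximately linearly like `1 − κ·s` (up to a factor `1 ± η`) and
`0 ≤ m ≤ (1+η)·κ`, then `∫₀^{t̄} m/μ⋆ ≤ ((1+η)/(1−η))·(log(μ⋆(t̄)⁻¹) + log(1+η))`. -/
theorem log_loss_time_integral_estimate
    (κ η tbar : ℝ) (hκ : 0 ≤ κ) (hη0 : 0 ≤ η) (hη : η ≤ 1 / 2)
    (htbar : 0 ≤ tbar) (hκt : κ * tbar < 1)
    (μstar m : ℝ → ℝ)
    (hμcont : ContinuousOn μstar (Set.Icc 0 tbar))
    (hmcont : ContinuousOn m (Set.Icc 0 tbar))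
    (hμlb : ∀ s ∈ Set.Icc (0:ℝ) tbar, (1 - η) * (1 - κ * s) ≤ μstar s)
    (hμub : ∀ s ∈ Set.Icc (0:ℝ) tbar, μstar s ≤ (1 + η) * (1 - κ * s))
    (hm0 : ∀ s ∈ Set.Icc (0:ℝ) tbar, 0 ≤ m s)
    (hm1 : ∀ s ∈ Set.Icc (0:ℝ) tbar, m s ≤ (1 + η) * κ) :
    (∫ s in (0:ℝ)..tbar, m s / μstar s) ≤
      ((1 + η) / (1 - η)) * (Real.log ((μstar tbar)⁻¹) + Real.log (1 + η)) := by
  have hη1 : 0 < 1 - η := by linarith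
  have hη2 : 0 < 1 + η := by linarith
  have hlin : ∀ s ∈ Set.Icc (0:ℝ) tbar, 0 < 1 - κ * s := by
    intro s hs
    have : κ * s ≤ κ * tbar := mul_le_mul_of_nonneg_left hs.2 hκ
    linarith
  have hμpos : ∀ s ∈ Set.Icc (0:ℝ) tbar, 0 < μstar s := fun s hs =>
    lt_of_lt_of_le (mul_pos hη1 (hlin s hs)) (hμlb s hs)
  have huIcc : Set.uIcc (0:ℝ) tbar = Set.Icc 0 tbar := Set.uIcc_of_le htbar
  -- integrability of LHS integrand
  have hint1 : IntervalIntegrable (fun s => m s / μstar s) volume 0 tbar := by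
    apply ContinuousOn.intervalIntegrable
    rw [huIcc]
    exact hmcont.div hμcont (fun s hs => (hμpos s hs).ne')
  -- comparison function
  set C : ℝ := (1 + η) / (1 - η) with hC
  have hCnn : 0 ≤ C := div_nonneg (le_of_lt hη2) (le_of_lt hη1)
  have hint2 : IntervalIntegrable (fun s => C * (κ / (1 - κ * s))) volume 0 tbar := by
    apply ContinuousOn.intervalIntegrable
    rw [huIcc]
    exact (continuousOn_const.div (continuousOn_const.sub
      (continuousOn_const.mul continuousOn_id))
      (fun s hs => (hlin s hs).ne')).const_smul C |>.congr (fun s _ => rfl)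
  have hmono : (∫ s in (0:ℝ)..tbar, m s / μstar s) ≤
      ∫ s in (0:ℝ)..tbar, C * (κ / (1 - κ * s)) := by
    apply intervalIntegral.integral_mono_on htbar hint1 hint2
    intro s hs
    have h1 := hlin s hs
    have h2 := hμpos s hs
    have : m s / μstar s ≤ ((1 + η) * κ) / ((1 - η) * (1 - κ * s)) :=
      div_le_div₀ (by positivity) (hm1 s hs) (mul_pos hη1 h1) (hμlb s hs)
    calc m s / μstar s ≤ ((1 + η) * κ) / ((1 - η) * (1 - κ * s)) := this
      _ = C * (κ / (1 - κ * s)) := by rw [hC, div_mul_div_comm]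
  -- compute the RHS integral via FTC
  have hderiv : ∀ s ∈ Set.uIcc (0:ℝ) tbar,
      HasDerivAt (fun x => -Real.log (1 - κ * x)) (κ / (1 - κ * s)) s := by
    intro s hs
    rw [huIcc] at hs
    have hg : HasDerivAt (fun x : ℝ => 1 - κ * x) (-κ) s := by
      exact (((hasDerivAt_id' s).const_mul κ).const_sub 1).congr_deriv (by ring)
    have := (hg.log (hlin s hs).ne').neg
    exact this.congr_deriv (by ring)
  have hintκ : IntervalIntegrable (fun s => κ / (1 - κ * s)) volume 0 tbar := by
    apply ContinuousOn.intervalIntegrable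
    rw [huIcc]
    exact continuousOn_const.div (continuousOn_const.sub
      (continuousOn_const.mul continuousOn_id)) (fun s hs => (hlin s hs).ne')
  have hcalc : (∫ s in (0:ℝ)..tbar, κ / (1 - κ * s)) = -Real.log (1 - κ * tbar) := by
    rw [intervalIntegral.integral_eq_sub_of_hasDerivAt hderiv hintκ]
    simp
  have hint2eq : (∫ s in (0:ℝ)..tbar, C * (κ / (1 - κ * s))) =
      C * (-Real.log (1 - κ * tbar)) := by
    rw [intervalIntegral.integral_const_mul, hcalc]
  -- final log comparison
  have htmem : tbar ∈ Set.Icc (0:ℝ) tbar := ⟨htbar, le_refl tbar⟩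
  have hμtpos := hμpos tbar htmem
  have hlint := hlin tbar htmem
  have hlog : Real.log (μstar tbar) ≤ Real.log (1 + η) + Real.log (1 - κ * tbar) := by
    rw [← Real.log_mul hη2.ne' hlint.ne']
    exact Real.log_le_log hμtpos (hμub tbar htmem)
  have key : -Real.log (1 - κ * tbar) ≤ Real.log ((μstar tbar)⁻¹) + Real.log (1 + η) := by
    rw [Real.log_inv]
    linarith
  calc (∫ s in (0:ℝ)..tbar, m s / μstar s)
      ≤ ∫ s in (0:ℝ)..tbar, C * (κ / (1 - κ * s)) := hmono
    _ = C * (-Real.log (1 - κ * tbar)) := hint2eq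
    _ ≤ C * (Real.log ((μstar tbar)⁻¹) + Real.log (1 + η)) :=
        mul_le_mul_of_nonneg_left key hCnn
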